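/- The Clebsch graph satisfies q = 2: there exists a real symmetric 16×16 matrix M whose off-diagonal zero pattern matches the adjacency matrix of the Clebsch graph and which has exactly two distinct eigenvalues. Explicitly, one can take M with all diagonal entries 1/2, each nonzero off-diagonal entry ±1/(2√5), and M² = M, so the eigenvalues are 0 and 1 each with multiplicity 8. -/

import Mathlib

/-- `M` has the off-diagonal zero pattern of `G`, i.e. `M ∈ S(G)` up to symmetry. -/
def matchesGraph {V : Type*} (G : SimpleGraph V) (M : Matrix V V ℝ) : Prop :=
  ∀ i j : V, i ≠ j → (M i j = 0 ↔ ¬ G.Adj i j)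

/-- `q(G)`: the minimum number of distinct eigenvalues over symmetric matrices in `S(G)`. -/
noncomputable def minDistinctEigs {V : Type*} [Fintype V] [DecidableEq V]
    (G : SimpleGraph V) : ℕ :=
  sInf {m | ∃ M : Matrix V V ℝ, M.IsSymm ∧ matchesGraph G M ∧ (spectrum ℝ M).ncard = m}

/-- The Clebsch graph: vertices are 4-bit strings, adjacent iff they differ
in exactly one bit or in all four bits. -/
def clebsch : SimpleGraph (Fin 4 → Bool) :=
  SimpleGraph.fromRel (fun u v =>
    (Finset.univ.filter fun i => u i ≠ v i).card = 1 ∨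
    (Finset.univ.filter fun i => u i ≠ v i).card = 4)

/-! ### Auxiliary construction: a signed adjacency matrix `S` with `S² = 5·I`. -/

/-- A signing of the Clebsch graph. -/
def sgn (u v : Fin 4 → Bool) : ℤ :=
  if u 0 ≠ v 0 ∧ u 1 ≠ v 1 ∧ u 2 ≠ v 2 ∧ u 3 ≠ v 3 then
    (if (u 0 != u 2 : Bool) then -1 else 1)
  else if u 0 ≠ v 0 ∧ u 1 = v 1 ∧ u 2 = v 2 ∧ u 3 = v 3 then 1
  else if u 0 = v 0 ∧ u 1 ≠ v 1 ∧ u 2 = v 2 ∧ u 3 = v 3 then (if u 0 then -1 else 1)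
  else if u 0 = v 0 ∧ u 1 = v 1 ∧ u 2 ≠ v 2 ∧ u 3 = v 3 then
    (if (u 0 != u 1 : Bool) then -1 else 1)
  else if u 0 = v 0 ∧ u 1 = v 1 ∧ u 2 = v 2 ∧ u 3 ≠ v 3 then
    (if ((u 0 != u 1) != u 2 : Bool) then -1 else 1)
  else 0

def crel (u v : Fin 4 → Bool) : Prop :=
  (Finset.univ.filter fun i => u i ≠ v i).card = 1 ∨
  (Finset.univ.filter fun i => u i ≠ v i).card = 4

instance crel.dec : ∀ u v, Decidable (crel u v) := fun u v => by unfold crel; infer_instance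

lemma clebsch_adj {u v : Fin 4 → Bool} :
    clebsch.Adj u v ↔ u ≠ v ∧ (crel u v ∨ crel v u) := by
  rw [clebsch, SimpleGraph.fromRel_adj]; rfl

lemma sgn_symm : ∀ u v : Fin 4 → Bool, sgn u v = sgn v u := by decide

lemma sgn_diag : ∀ u : Fin 4 → Bool, sgn u u = 0 := by decide

lemma sgn_sum : ∀ u v : Fin 4 → Bool,
    (∑ w, sgn u w * sgn w v) = if u = v then 5 else 0 := by decide

lemma sgn_zero_iff : ∀ u v : Fin 4 → Bool,
    (sgn u v = 0 ↔ ¬(u ≠ v ∧ (crel u v ∨ crel v u))) := by decide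

lemma sgn_pm : ∀ u v : Fin 4 → Bool, sgn u v = 0 ∨ sgn u v = 1 ∨ sgn u v = -1 := by decide

/-- a base vertex -/
def u₀ : Fin 4 → Bool := fun _ => false
/-- a neighbor of `u₀` -/
def v₀ : Fin 4 → Bool := fun i => decide (i = 0)

lemma base_facts : sgn u₀ v₀ = 1 ∧ u₀ ≠ v₀ ∧ crel u₀ v₀ := by decide

noncomputable def Sr : Matrix (Fin 4 → Bool) (Fin 4 → Bool) ℝ :=
  Matrix.of fun u v => ((sgn u v : ℤ) : ℝ)

noncomputable def Mc : Matrix (Fin 4 → Bool) (Fin 4 → Bool) ℝ :=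
  (2:ℝ)⁻¹ • (1 + (Real.sqrt 5)⁻¹ • Sr)

lemma sqrt5_pos : (0:ℝ) < Real.sqrt 5 := Real.sqrt_pos.mpr (by norm_num)

lemma sqrt5_inv_ne : (Real.sqrt 5)⁻¹ ≠ 0 := inv_ne_zero (ne_of_gt sqrt5_pos)

lemma Mc_apply (u v : Fin 4 → Bool) :
    Mc u v = 2⁻¹ * ((if u = v then (1:ℝ) else 0) + (Real.sqrt 5)⁻¹ * (sgn u v : ℝ)) := by
  simp [Mc, Sr, Matrix.smul_apply, Matrix.add_apply, Matrix.one_apply]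

lemma Sr_mul_Sr : Sr * Sr = (5:ℝ) • 1 := by
  ext u v
  have h : ((∑ w, sgn u w * sgn w v : ℤ) : ℝ) = ∑ w, (sgn u w : ℝ) * (sgn w v : ℝ) := by
    push_cast; rfl
  simp only [Matrix.mul_apply, Sr, Matrix.of_apply, Matrix.smul_apply, Matrix.one_apply,
    ← h, sgn_sum u v]
  split <;> simp

lemma Mc_idem : Mc * Mc = Mc := by
  have h5 : (Real.sqrt 5)⁻¹ * (Real.sqrt 5)⁻¹ * 5 = 1 := by
    rw [← mul_inv, Real.mul_self_sqrt (by norm_num : (0:ℝ) ≤ 5)]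
    norm_num
  simp only [Mc, smul_mul_assoc, mul_smul_comm, add_mul, mul_add, one_mul, mul_one,
    Sr_mul_Sr, smul_smul, smul_add]
  match_scalars
  · linear_combination ((2:ℝ)⁻¹ * 2⁻¹) * h5
  · ring

lemma Mc_symm : Mc.IsSymm := by
  apply Matrix.IsSymm.ext
  intro i j
  rw [Mc_apply, Mc_apply, sgn_symm j i]
  by_cases h : i = j <;> simp [h, eq_comm]

lemma Mc_diag (v : Fin 4 → Bool) : Mc v v = 1 / 2 := by
  rw [Mc_apply]; simp [sgn_diag v]

lemma Mc_matches : matchesGraph clebsch Mc := by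
  intro i j hij
  rw [show (¬ clebsch.Adj i j) ↔ ¬(i ≠ j ∧ (crel i j ∨ crel j i)) from not_congr clebsch_adj,
    ← sgn_zero_iff i j, Mc_apply]
  have h2 : ((2:ℝ)⁻¹ : ℝ) ≠ 0 := by norm_num
  simp [hij, mul_eq_zero, h2, sqrt5_inv_ne]

lemma Mc_base : Mc u₀ v₀ = 2⁻¹ * (Real.sqrt 5)⁻¹ := by
  rw [Mc_apply, base_facts.1]
  simp [base_facts.2.1]

lemma Mc_base_ne : Mc u₀ v₀ ≠ 0 := by
  rw [Mc_base]
  positivity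

lemma Mc_ne_zero : Mc ≠ 0 := by
  intro h
  have := congrFun (congrFun h u₀) u₀
  rw [Mc_diag] at this
  norm_num at this

lemma Mc_ne_one : Mc ≠ 1 := by
  intro h
  apply Mc_base_ne
  rw [h, Matrix.one_apply_ne base_facts.2.1]

lemma Mc_spectrum : spectrum ℝ Mc = {0, 1} := by
  ext x
  simp only [Set.mem_insert_iff, Set.mem_singleton_iff]
  constructor
  · intro hx
    by_contra hc
    push_neg at hc
    obtain ⟨hx0, hx1⟩ := hc
    have hx1' : x - 1 ≠ 0 := sub_ne_zero.mpr hx1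
    rw [spectrum.mem_iff] at hx
    apply hx
    apply (Matrix.isUnit_iff_isUnit_det _).mpr
    apply Matrix.isUnit_det_of_right_inverse (B := x⁻¹ • 1 + (x*(x-1))⁻¹ • Mc)
    rw [Algebra.algebraMap_eq_smul_one]
    simp only [sub_mul, mul_add, smul_mul_assoc, mul_smul_comm, one_mul, mul_one,
      Mc_idem, smul_smul]
    match_scalars
    · field_simp
    · field_simp
      ring
  · rintro (rfl | rfl)
    · rw [spectrum.mem_iff]
      intro h
      rw [map_zero, zero_sub, IsUnit.neg_iff] at h
      obtain ⟨b, hb⟩ := h.exists_left_inv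
      apply Mc_ne_one
      calc Mc = 1 * Mc := (one_mul _).symm
        _ = b * Mc * Mc := by rw [hb]
        _ = b * Mc := by rw [mul_assoc, Mc_idem]
        _ = 1 := hb
    · rw [spectrum.mem_iff]
      intro h
      rw [map_one] at h
      obtain ⟨b, hb⟩ := h.exists_left_inv
      apply Mc_ne_zero
      calc Mc = 1 * Mc := (one_mul _).symm
        _ = b * (1 - Mc) * Mc := by rw [hb]
        _ = b * ((1 - Mc) * Mc) := by rw [mul_assoc]
        _ = b * (Mc - Mc * Mc) := by rw [sub_mul, one_mul]
        _ = 0 := by rw [Mc_idem, sub_self, mul_zero]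

lemma Mc_ncard : (spectrum ℝ Mc).ncard = 2 := by
  rw [Mc_spectrum]
  exact Set.ncard_pair (by norm_num)

lemma lower_bound : ∀ m ∈ {m | ∃ M : Matrix (Fin 4 → Bool) (Fin 4 → Bool) ℝ,
    M.IsSymm ∧ matchesGraph clebsch M ∧ (spectrum ℝ M).ncard = m}, 2 ≤ m := by
  rintro m ⟨N, hNs, hNm, rfl⟩
  have hH : N.IsHermitian := by
    apply Matrix.IsHermitian.ext
    intro i j
    simpa using hNs.apply i j
  have hspec : spectrum ℝ N = Set.range hH.eigenvalues :=
    Matrix.IsHermitian.spectrum_real_eq_range_eigenvalues hH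
  by_contra hlt
  push_neg at hlt
  -- spectrum is nonempty and finite
  have hfin : (spectrum ℝ N).Finite := by rw [hspec]; exact Set.finite_range _
  have hne : (spectrum ℝ N).Nonempty := by
    rw [hspec]; exact ⟨hH.eigenvalues u₀, Set.mem_range_self _⟩
  have hpos : 0 < (spectrum ℝ N).ncard := by
    rwa [Set.ncard_pos hfin]
  have h1 : (spectrum ℝ N).ncard = 1 := by omega
  rw [Set.ncard_eq_one] at h1
  obtain ⟨c, hc⟩ := h1
  have heig : ∀ i, hH.eigenvalues i = c := by
    intro i
    have := hH.eigenvalues_mem_spectrum_real i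
    rw [hc] at this
    exact this
  have hNc : N = c • 1 := by
    have hsp := hH.spectral_theorem
    have hdiag : Matrix.diagonal (RCLike.ofReal ∘ hH.eigenvalues) =
        c • (1 : Matrix (Fin 4 → Bool) (Fin 4 → Bool) ℝ) := by
      ext i j
      by_cases h : i = j <;>
        simp [Matrix.diagonal_apply, Matrix.one_apply, h, heig]
    have hU : (hH.eigenvectorUnitary : Matrix (Fin 4 → Bool) (Fin 4 → Bool) ℝ) *
        star (hH.eigenvectorUnitary : Matrix (Fin 4 → Bool) (Fin 4 → Bool) ℝ) = 1 :=
      Matrix.mem_unitaryGroup_iff.mp hH.eigenvectorUnitary.2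
    rw [hsp, hdiag, Unitary.conjStarAlgAut_apply, mul_smul_comm, mul_one, smul_mul_assoc, hU]
  -- but the graph has an edge, so N has a nonzero off-diagonal entry
  have hadj : clebsch.Adj u₀ v₀ := clebsch_adj.mpr ⟨base_facts.2.1, Or.inl base_facts.2.2⟩
  have := (hNm u₀ v₀ base_facts.2.1).not
  rw [not_not] at this
  have hne0 : N u₀ v₀ ≠ 0 := by
    intro h0
    exact ((hNm u₀ v₀ base_facts.2.1).mp h0) hadj
  apply hne0
  rw [hNc]
  simp [Matrix.smul_apply, Matrix.one_apply_ne base_facts.2.1]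

theorem clebsch_q_eq_two :
    minDistinctEigs clebsch = 2 ∧
    ∃ M : Matrix (Fin 4 → Bool) (Fin 4 → Bool) ℝ,
      M.IsSymm ∧ matchesGraph clebsch M ∧ M * M = M ∧
      (∀ v, M v v = 1 / 2) ∧
      (∀ u v, clebsch.Adj u v → |M u v| = 1 / (2 * Real.sqrt 5)) ∧
      (spectrum ℝ M).ncard = 2 := by
  have habs : ∀ u v, clebsch.Adj u v → |Mc u v| = 1 / (2 * Real.sqrt 5) := by
    intro u v huv
    obtain ⟨hne, hrel⟩ := clebsch_adj.mp huv
    have hnz : sgn u v ≠ 0 := by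
      intro h0
      exact (sgn_zero_iff u v).mp h0 ⟨hne, hrel⟩
    have hval : Mc u v = 2⁻¹ * ((Real.sqrt 5)⁻¹ * (sgn u v : ℝ)) := by
      rw [Mc_apply]; simp [hne]
    have htarget : 1 / (2 * Real.sqrt 5) = 2⁻¹ * (Real.sqrt 5)⁻¹ := by
      rw [one_div, mul_inv]
    have hpos : (0:ℝ) ≤ 2⁻¹ * (Real.sqrt 5)⁻¹ := by positivity
    rcases sgn_pm u v with h | h | h
    · exact absurd h hnz
    · rw [hval, h]
      push_cast
      have he : (2:ℝ)⁻¹ * ((Real.sqrt 5)⁻¹ * 1) = 2⁻¹ * (Real.sqrt 5)⁻¹ := by ring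
      rw [he, abs_of_nonneg hpos, htarget]
    · rw [hval, h]
      push_cast
      have he : (2:ℝ)⁻¹ * ((Real.sqrt 5)⁻¹ * (-1)) = -(2⁻¹ * (Real.sqrt 5)⁻¹) := by ring
      rw [he, abs_neg, abs_of_nonneg hpos, htarget]
  constructor
  · have mem2 : 2 ∈ {m | ∃ M : Matrix (Fin 4 → Bool) (Fin 4 → Bool) ℝ,
        M.IsSymm ∧ matchesGraph clebsch M ∧ (spectrum ℝ M).ncard = m} :=
      ⟨Mc, Mc_symm, Mc_matches, Mc_ncard⟩
    unfold minDistinctEigs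
    exact le_antisymm (Nat.sInf_le mem2) (le_csInf ⟨2, mem2⟩ lower_bound)
  · exact ⟨Mc, Mc_symm, Mc_matches, Mc_idem, Mc_diag, habs, Mc_ncard⟩
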